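/- For any idealoid I of a category C, there exists a largest subdivisible subidealoid of I; namely, the class J of all morphisms f : C(0) → C(1) admitting a refinement to a functor C : (ℚ ∩ [0,1]) → C with all morphisms C(a) → C(b), a < b, lying in I. J is a subdivisible idealoid contained in I, and it contains every subdivisible subidealoid of I. -/

import Mathlib

open CategoryTheory

/-- An idealoid of a category: a class of morphisms closed under pre- and post-composition
with arbitrary morphisms. -/
def IsIdealoid {C : Type*} [Category C] (I : MorphismProperty C) : Prop :=
  ∀ ⦃W X Y Z : C⦄ (h : W ⟶ X) (f : X ⟶ Y) (g : Y ⟶ Z), I f → I (h ≫ f ≫ g)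

/-- A subdivisible idealoid: every member factors as a composite of two members. -/
def IsSubdivisible {C : Type*} [Category C] (I : MorphismProperty C) : Prop :=
  ∀ ⦃X Y : C⦄ (f : X ⟶ Y), I f → ∃ (Z : C) (h : X ⟶ Z) (g : Z ⟶ Y), I h ∧ I g ∧ h ≫ g = f

/-- The poset `ℚ ∩ [0,1]`, viewed as a category. -/
abbrev QIcc : Type := Set.Icc (0 : ℚ) 1

def qzero : QIcc := ⟨0, by norm_num⟩
def qone : QIcc := ⟨1, by norm_num⟩

lemma qzero_le_qone : qzero ≤ qone := Subtype.mk_le_mk.mpr zero_le_one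

/-- The class `J` of morphisms admitting a refinement to a functor `(ℚ ∩ [0,1]) ⥤ C` all of
whose strict-transition morphisms lie in `I`. -/
def Refinable {C : Type*} [Category C] (I : MorphismProperty C) : MorphismProperty C :=
  fun X Y f =>
    ∃ (F : QIcc ⥤ C) (e₀ : F.obj qzero ≅ X) (e₁ : F.obj qone ≅ Y),
      (∀ (a b : QIcc) (h : a < b), I (F.map (homOfLE h.le))) ∧
      F.map (homOfLE qzero_le_qone) = e₀.hom ≫ f ≫ e₁.inv

namespace LSS

lemma zero_le' (q : QIcc) : qzero ≤ q := q.2.1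
lemma le_one' (q : QIcc) : q ≤ qone := q.2.2
lemma qzero_lt_qone : qzero < qone := Subtype.mk_lt_mk.mpr one_pos
lemma ne_one_of_lt {a b : QIcc} (hl : a < b) : a ≠ qone :=
  fun e => absurd (le_one' b) (not_le.mpr (e ▸ hl))
lemma ne_zero_of_lt {a b : QIcc} (hl : a < b) : b ≠ qzero :=
  fun e => absurd (zero_le' a) (not_le.mpr (e ▸ hl))
lemma qzero_ne_qone : qzero ≠ qone := by
  intro e
  have : (0:ℚ) = 1 := congrArg Subtype.val e
  norm_num at this

lemma map_homOfLE_congr {C : Type*} [Category C] (F : QIcc ⥤ C) {a b a' b' : QIcc}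
    (h : a ≤ b) (h' : a' ≤ b') (ea : a = a') (eb : b = b') :
    F.map (homOfLE h) = eqToHom (by rw [ea]) ≫ F.map (homOfLE h') ≫ eqToHom (by rw [eb]) := by
  subst ea; subst eb; simp

variable {C : Type*} [Category C] {I : MorphismProperty C}

theorem refinable_le (hI : IsIdealoid I) {X Y : C} (f : X ⟶ Y) (hf : Refinable I f) : I f := by
  obtain ⟨F, e₀, e₁, hstr, hmap⟩ := hf
  have := hI e₀.inv (F.map (homOfLE qzero_le_qone)) e₁.hom (hstr _ _ qzero_lt_qone)
  simpa [hmap] using this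

def qhalf : QIcc := ⟨1/2, by norm_num⟩
lemma qzero_le_qhalf : qzero ≤ qhalf := by
  rw [qzero, qhalf, Subtype.mk_le_mk]; norm_num
lemma qhalf_le_qone : qhalf ≤ qone := by
  rw [qhalf, qone, Subtype.mk_le_mk]; norm_num

def σL : QIcc → QIcc := fun q => ⟨q / 2, by
  constructor
  · have := q.2.1; linarith
  · have := q.2.2; linarith⟩

def σR : QIcc → QIcc := fun q => ⟨(q + 1) / 2, by
  constructor
  · have := q.2.1; linarith
  · have := q.2.2; linarith⟩

lemma σL_strictMono : StrictMono σL := fun a b h => by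
  simp only [σL, Subtype.mk_lt_mk]
  have : (a:ℚ) < b := h
  show (a:ℚ)/2 < (b:ℚ)/2
  linarith

lemma σR_strictMono : StrictMono σR := fun a b h => by
  simp only [σR, Subtype.mk_lt_mk]
  have : (a:ℚ) < b := h
  show ((a:ℚ)+1)/2 < ((b:ℚ)+1)/2
  linarith

lemma σL_zero : σL qzero = qzero := by apply Subtype.ext; show (0:ℚ)/2 = 0; norm_num
lemma σL_one : σL qone = qhalf := by apply Subtype.ext; show (1:ℚ)/2 = 1/2; norm_num
lemma σR_zero : σR qzero = qhalf := by apply Subtype.ext; show ((0:ℚ)+1)/2 = 1/2; norm_num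
lemma σR_one : σR qone = qone := by apply Subtype.ext; show ((1:ℚ)+1)/2 = 1; norm_num

lemma comp_map_eq (F : QIcc ⥤ C) (σ : QIcc → QIcc) (hm : Monotone σ) {a b : QIcc} (h : a ≤ b)
    {a' b' : QIcc} (h' : a' ≤ b') (ea : σ a = a') (eb : σ b = b') :
    (hm.functor ⋙ F).map (homOfLE h)
      = eqToHom (congrArg F.obj ea) ≫ F.map (homOfLE h') ≫ eqToHom (congrArg F.obj eb).symm := by
  have h1 : (hm.functor ⋙ F).map (homOfLE h) = F.map (homOfLE (hm h)) :=
    congrArg F.map (Subsingleton.elim _ _)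
  rw [h1, map_homOfLE_congr F (hm h) h' ea eb]

theorem refinable_subdiv : IsSubdivisible (Refinable I) := by
  rintro X Y f ⟨F, e₀, e₁, hstr, hmap⟩
  refine ⟨F.obj qhalf, e₀.inv ≫ F.map (homOfLE qzero_le_qhalf),
    F.map (homOfLE qhalf_le_qone) ≫ e₁.hom, ?_, ?_, ?_⟩
  · refine ⟨σL_strictMono.monotone.functor ⋙ F,
      eqToIso (congrArg F.obj σL_zero) ≪≫ e₀, eqToIso (congrArg F.obj σL_one), ?_, ?_⟩
    · intro a b h
      have h2 : (σL_strictMono.monotone.functor ⋙ F).map (homOfLE h.le)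
          = F.map (homOfLE (σL_strictMono h).le) := congrArg F.map (Subsingleton.elim _ _)
      rw [h2]
      exact hstr _ _ (σL_strictMono h)
    · rw [comp_map_eq F σL σL_strictMono.monotone qzero_le_qone qzero_le_qhalf σL_zero σL_one]
      simp
      congr 1
  · refine ⟨σR_strictMono.monotone.functor ⋙ F,
      eqToIso (congrArg F.obj σR_zero), eqToIso (congrArg F.obj σR_one) ≪≫ e₁, ?_, ?_⟩
    · intro a b h
      have h2 : (σR_strictMono.monotone.functor ⋙ F).map (homOfLE h.le)
          = F.map (homOfLE (σR_strictMono h).le) := congrArg F.map (Subsingleton.elim _ _)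
      rw [h2]
      exact hstr _ _ (σR_strictMono h)
    · rw [comp_map_eq F σR σR_strictMono.monotone qzero_le_qone qhalf_le_qone σR_zero σR_one]
      simp
      rfl
  · have : homOfLE qzero_le_qhalf ≫ homOfLE qhalf_le_qone = homOfLE qzero_le_qone := by
      simp
    rw [Category.assoc, ← Category.assoc (F.map _), ← Functor.map_comp, this, hmap]
    simp

section PW
variable {C : Type*} [Category C] (F : QIcc ⥤ C) {X Y W Z : C}

noncomputable def pwObj (W Z : C) : QIcc → C := fun q =>
  if q = qzero then W else if q = qone then Z else F.obj q

lemma pwObj_zero : pwObj F W Z qzero = W := if_pos rfl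

lemma pwObj_one : pwObj F W Z qone = Z := by
  rw [pwObj, if_neg qzero_ne_qone.symm, if_pos rfl]

lemma pwObj_mid {q : QIcc} (h0 : q ≠ qzero) (h1 : q ≠ qone) : pwObj F W Z q = F.obj q := by
  rw [pwObj, if_neg h0, if_neg h1]

variable (e₀ : F.obj qzero ≅ X) (e₁ : F.obj qone ≅ Y) (h : W ⟶ X) (g : Y ⟶ Z)

noncomputable def pwPre (q : QIcc) (hq : q ≠ qone) : pwObj F W Z q ⟶ F.obj q :=
  if h0 : q = qzero then
    eqToHom (by rw [h0, pwObj_zero]) ≫ h ≫ e₀.inv ≫ eqToHom (congrArg F.obj h0.symm)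
  else eqToHom (pwObj_mid F h0 hq)

noncomputable def pwPost (q : QIcc) (hq : q ≠ qzero) : F.obj q ⟶ pwObj F W Z q :=
  if h1 : q = qone then
    eqToHom (congrArg F.obj h1) ≫ e₁.hom ≫ g ≫ eqToHom (by rw [h1, pwObj_one])
  else eqToHom ((pwObj_mid F hq h1).symm)

lemma pw_post_pre (q : QIcc) (h0 : q ≠ qzero) (h1 : q ≠ qone) :
    pwPost F e₁ g q h0 ≫ pwPre F e₀ h q h1 = 𝟙 (F.obj q) := by
  rw [pwPost, dif_neg h1, pwPre, dif_neg h0]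
  simp

noncomputable def pwMap {a b : QIcc} (φ : a ⟶ b) : pwObj F W Z a ⟶ pwObj F W Z b :=
  if hab : a = b then eqToHom (congrArg (pwObj F W Z) hab)
  else
    pwPre F e₀ h a (ne_one_of_lt (lt_of_le_of_ne (leOfHom φ) hab)) ≫ F.map φ ≫
      pwPost F e₁ g b (ne_zero_of_lt (lt_of_le_of_ne (leOfHom φ) hab))

lemma pwMap_comp {a b c : QIcc} (φ : a ⟶ b) (ψ : b ⟶ c) :
    pwMap F e₀ e₁ h g (φ ≫ ψ) = pwMap F e₀ e₁ h g φ ≫ pwMap F e₀ e₁ h g ψ := by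
  by_cases hab : a = b
  · subst hab
    have e1 : φ = 𝟙 a := Subsingleton.elim _ _
    have e2 : pwMap F e₀ e₁ h g (𝟙 a) = 𝟙 _ := by rw [pwMap, dif_pos rfl, eqToHom_refl]
    rw [e1, Category.id_comp, e2, Category.id_comp]
  · by_cases hbc : b = c
    · subst hbc
      have e1 : ψ = 𝟙 b := Subsingleton.elim _ _
      have e2 : pwMap F e₀ e₁ h g (𝟙 b) = 𝟙 _ := by rw [pwMap, dif_pos rfl, eqToHom_refl]
      rw [e1, Category.comp_id, e2, Category.comp_id]
    · have hac : a ≠ c := fun e => hab (le_antisymm (leOfHom φ) (e ▸ leOfHom ψ))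
      rw [pwMap, pwMap, pwMap, dif_neg hab, dif_neg hbc, dif_neg hac]
      have hb0 : b ≠ qzero := ne_zero_of_lt (lt_of_le_of_ne (leOfHom φ) hab)
      have hb1 : b ≠ qone := ne_one_of_lt (lt_of_le_of_ne (leOfHom ψ) hbc)
      have key := pw_post_pre F (W := W) (Z := Z) e₀ e₁ h g b hb0 hb1
      have hmapc : F.map (φ ≫ ψ) = F.map φ ≫ F.map ψ := F.map_comp φ ψ
      simp only [hmapc, Category.assoc]
      congr 2
      rw [← Category.assoc (pwPost F e₁ g b hb0), key, Category.id_comp]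

noncomputable def pwFunctor : QIcc ⥤ C where
  obj := pwObj F W Z
  map := pwMap F e₀ e₁ h g
  map_id q := by
    show pwMap F e₀ e₁ h g (𝟙 q) = _
    rw [pwMap, dif_pos rfl, eqToHom_refl]
  map_comp := pwMap_comp F e₀ e₁ h g

end PW

theorem refinable_idealoid (hI : IsIdealoid I) : IsIdealoid (Refinable I) := by
  rintro W X Y Z h f g ⟨F, e₀, e₁, hstr, hmap⟩
  refine ⟨pwFunctor F (W := W) (Z := Z) e₀ e₁ h g, eqToIso (pwObj_zero F (W := W) (Z := Z)),
    eqToIso (pwObj_one F (W := W) (Z := Z)), ?_, ?_⟩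
  · intro a b hlt
    have hne : a ≠ b := ne_of_lt hlt
    show I (pwMap F e₀ e₁ h g _)
    rw [pwMap, dif_neg hne]
    exact hI _ _ _ (hstr a b hlt)
  · show pwMap F e₀ e₁ h g (homOfLE qzero_le_qone) = _
    rw [pwMap, dif_neg qzero_ne_qone]
    rw [pwPre, dif_pos rfl, pwPost, dif_pos rfl]
    have hm : F.map (homOfLE qzero_le_qone) = e₀.hom ≫ f ≫ e₁.inv := hmap
    simp [hm, eqToIso]
    rfl

structure NChain (C : Type*) [Category C] where
  obj : ℕ → C
  stp : ∀ k, obj k ⟶ obj (k+1)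

variable (K : MorphismProperty C)

section Chains
variable (hsub : IsSubdivisible K)

open Classical in
/-- Chosen midpoint data for subdividing one step of a chain. -/
noncomputable def midData (L : NChain C) (k : ℕ) :
    Σ' (M : C) (u : L.obj k ⟶ M) (v : M ⟶ L.obj (k+1)),
      u ≫ v = L.stp k ∧ (K (L.stp k) → K u ∧ K v) :=
  if hk : K (L.stp k) then
    let e1 := hsub _ hk
    let e2 := e1.choose_spec
    let e3 := e2.choose_spec
    let e4 := e3.choose_spec
    ⟨e1.choose, e2.choose, e3.choose, e4.2.2, fun _ => ⟨e4.1, e4.2.1⟩⟩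
  else ⟨L.obj k, 𝟙 _, L.stp k, Category.id_comp _, fun h => absurd h hk⟩

noncomputable def subObj (L : NChain C) : ℕ → C := fun k =>
  if k % 2 = 0 then L.obj (k / 2) else (midData K hsub L (k / 2)).1

lemma subObj_even (L : NChain C) (j : ℕ) : subObj K hsub L (2 * j) = L.obj j := by
  rw [subObj, if_pos (by omega)]
  congr 1
  omega

lemma subObj_odd (L : NChain C) (j : ℕ) :
    subObj K hsub L (2 * j + 1) = (midData K hsub L j).1 := by
  rw [subObj, if_neg (by omega)]
  rw [show (2 * j + 1) / 2 = j by omega]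

lemma midU_congr (L : NChain C) {j j' : ℕ} (h : j = j') :
    (midData K hsub L j).2.1 = eqToHom (show L.obj j = L.obj j' by rw [h]) ≫
      (midData K hsub L j').2.1 ≫
      eqToHom (show (midData K hsub L j').1 = (midData K hsub L j).1 by rw [h]) := by
  subst h; simp

lemma midV_congr (L : NChain C) {j j' : ℕ} (h : j = j') :
    (midData K hsub L j).2.2.1
      = eqToHom (show (midData K hsub L j).1 = (midData K hsub L j').1 by rw [h]) ≫
        (midData K hsub L j').2.2.1 ≫
        eqToHom (show L.obj (j' + 1) = L.obj (j + 1) by rw [h]) := by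
  subst h; simp

noncomputable def subStp (L : NChain C) (k : ℕ) :
    subObj K hsub L k ⟶ subObj K hsub L (k + 1) :=
  if hk : k % 2 = 0 then
    eqToHom (show subObj K hsub L k = L.obj (k / 2) by rw [subObj, if_pos hk]) ≫
      (midData K hsub L (k / 2)).2.1 ≫
      eqToHom (show (midData K hsub L (k / 2)).1 = subObj K hsub L (k + 1) by
        rw [subObj, if_neg (by omega), show (k+1)/2 = k/2 by omega])
  else
    eqToHom (show subObj K hsub L k = (midData K hsub L (k / 2)).1 by
        rw [subObj, if_neg hk]) ≫
      (midData K hsub L (k / 2)).2.2.1 ≫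
      eqToHom (show L.obj (k / 2 + 1) = subObj K hsub L (k + 1) by
        rw [subObj, if_pos (by omega), show (k+1)/2 = k/2 + 1 by omega])

noncomputable def subChain (L : NChain C) : NChain C where
  obj := subObj K hsub L
  stp := subStp K hsub L

lemma subStp_even (L : NChain C) (j : ℕ) :
    subStp K hsub L (2 * j)
      = eqToHom (subObj_even K hsub L j) ≫ (midData K hsub L j).2.1 ≫
          eqToHom (subObj_odd K hsub L j).symm := by
  rw [subStp, dif_pos (by omega : (2 * j) % 2 = 0)]
  rw [midU_congr K hsub L (show 2 * j / 2 = j by omega)]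
  simp [eqToHom_trans]

lemma subStp_odd (L : NChain C) (j : ℕ) :
    subStp K hsub L (2 * j + 1)
      = eqToHom (subObj_odd K hsub L j) ≫ (midData K hsub L j).2.2.1 ≫
          eqToHom (subObj_even K hsub L (j + 1)).symm := by
  rw [subStp, dif_neg (by omega : ¬(2 * j + 1) % 2 = 0)]
  rw [midV_congr K hsub L (show (2 * j + 1) / 2 = j by omega)]
  simp [eqToHom_trans]

end Chains
section Levels
variable (hsub : IsSubdivisible K) {X Y : C} (f : X ⟶ Y)

def baseChain : NChain C where
  obj := fun k => match k with | 0 => X | _+1 => Y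
  stp := fun k => match k with | 0 => f | _+1 => 𝟙 Y

noncomputable def level : ℕ → NChain C
  | 0 => baseChain f
  | n+1 => subChain K hsub (level n)

noncomputable def O (n k : ℕ) : C := (level K hsub f n).obj k
noncomputable def step (n k : ℕ) : O K hsub f n k ⟶ O K hsub f n (k+1) :=
  (level K hsub f n).stp k

lemma O_even (n j : ℕ) : O K hsub f (n+1) (2 * j) = O K hsub f n j :=
  subObj_even K hsub (level K hsub f n) j

lemma step_congr (n : ℕ) {k k' : ℕ} (h : k = k') :
    step K hsub f n k = eqToHom (by rw [h]) ≫ step K hsub f n k' ≫ eqToHom (by rw [h]) := by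
  subst h; simp

lemma O_zero (n : ℕ) : O K hsub f n 0 = X := by
  induction n with
  | zero => rfl
  | succ n ih =>
    have : O K hsub f (n+1) (2 * 0) = O K hsub f n 0 := O_even K hsub f n 0
    simpa using this.trans ih

lemma O_top (n : ℕ) : O K hsub f n (2^n) = Y := by
  induction n with
  | zero => rfl
  | succ n ih =>
    have h2 : (2:ℕ)^(n+1) = 2 * 2^n := by ring
    rw [h2]
    exact (O_even K hsub f n (2^n)).trans ih

lemma K_cast (hK : IsIdealoid K) {A B A' B' : C} (e : A' = A) (e' : B = B') {φ : A ⟶ B}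
    (h : K φ) : K (eqToHom e ≫ φ ≫ eqToHom e') := hK _ _ _ h

lemma step_mem (hK : IsIdealoid K) (hf : K f) : ∀ n k, k < 2^n → K (step K hsub f n k) := by
  intro n
  induction n with
  | zero =>
    intro k hk
    interval_cases k
    exact hf
  | succ n ih =>
    intro k hk
    rcases Nat.even_or_odd k with ⟨j, hj⟩ | ⟨j, hj⟩
    · subst hj
      have hj2 : j < 2^n := by
        have : (2:ℕ)^(n+1) = 2 * 2^n := by ring
        omega
      have hKs := ih j hj2
      have hin : K (step K hsub f (n+1) (2 * j)) := by
        show K (subStp K hsub (level K hsub f n) (2 * j))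
        rw [subStp_even]
        exact K_cast K hK _ _ (((midData K hsub (level K hsub f n) j).2.2.2.2 hKs).1)
      rw [step_congr K hsub f (n+1) (show j + j = 2 * j by omega)]
      exact K_cast K hK _ _ hin
    · subst hj
      have hj2 : j < 2^n := by
        have : (2:ℕ)^(n+1) = 2 * 2^n := by ring
        omega
      have hKs := ih j hj2
      show K (subStp K hsub (level K hsub f n) (2 * j + 1))
      rw [subStp_odd]
      exact K_cast K hK _ _ (((midData K hsub (level K hsub f n) j).2.2.2.2 hKs).2)


lemma step_split (n j : ℕ) :
    step K hsub f (n+1) (2 * j) ≫ step K hsub f (n+1) (2 * j + 1)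
      = eqToHom (O_even K hsub f n j) ≫ step K hsub f n j ≫
          eqToHom (show O K hsub f n (j+1) = O K hsub f (n+1) (2*j+1+1) by
            rw [show 2*j+1+1 = 2*(j+1) by omega, O_even]) := by
  show subStp K hsub (level K hsub f n) (2 * j) ≫ subStp K hsub (level K hsub f n) (2 * j + 1) = _
  rw [subStp_even, subStp_odd]
  have hspec := (midData K hsub (level K hsub f n) j).2.2.2.1
  simp only [Category.assoc, eqToHom_trans_assoc, eqToHom_refl, Category.id_comp]
  rw [← Category.assoc ((midData K hsub (level K hsub f n) j).2.1), hspec]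
  rfl

end Levels

section Chain2
variable (hsub : IsSubdivisible K) {X Y : C} (f : X ⟶ Y)

noncomputable def chainAux (n k : ℕ) : (j : ℕ) → (O K hsub f n k ⟶ O K hsub f n (k+j))
  | 0 => 𝟙 _
  | j+1 => chainAux n k j ≫ step K hsub f n (k+j)

lemma chainAux_congr (n k : ℕ) {j j' : ℕ} (h : j = j') :
    chainAux K hsub f n k j
      = chainAux K hsub f n k j' ≫ eqToHom (show O K hsub f n (k+j') = O K hsub f n (k+j) by
          rw [h]) := by
  subst h; simp

noncomputable def chain (n k k' : ℕ) (h : k ≤ k') : O K hsub f n k ⟶ O K hsub f n k' :=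
  chainAux K hsub f n k (k' - k) ≫
    eqToHom (show O K hsub f n (k + (k' - k)) = O K hsub f n k' by
      rw [Nat.add_sub_cancel' h])

lemma chain_congr {n n' : ℕ} (hn : n = n') {k k' j j' : ℕ} (hk : k = j) (hk' : k' = j')
    (h : k ≤ k') :
    chain K hsub f n k k' h
      = eqToHom (show O K hsub f n k = O K hsub f n' j by rw [hk, hn]) ≫
          chain K hsub f n' j j' (by omega) ≫
          eqToHom (show O K hsub f n' j' = O K hsub f n k' by rw [hk', hn]) := by
  subst hn; subst hk; subst hk'; simp

lemma chain_self (n k : ℕ) : chain K hsub f n k k le_rfl = 𝟙 _ := by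
  rw [chain, chainAux_congr K hsub f n k (show k - k = 0 by omega)]
  simp [chainAux]

lemma chain_succ (n k k' : ℕ) (h : k ≤ k') (h2 : k ≤ k' + 1) :
    chain K hsub f n k (k' + 1) h2 = chain K hsub f n k k' h ≫ step K hsub f n k' := by
  rw [chain, chainAux_congr K hsub f n k (show k' + 1 - k = (k' - k) + 1 by omega)]
  simp only [chainAux]
  rw [step_congr K hsub f n (show k + (k' - k) = k' by omega), chain]
  simp

lemma chain_comp (n k k' k'' : ℕ) (h : k ≤ k') (h' : k' ≤ k'') :
    chain K hsub f n k k' h ≫ chain K hsub f n k' k'' h' =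
      chain K hsub f n k k'' (h.trans h') := by
  induction k'', h' using Nat.le_induction with
  | base => rw [chain_self]; simp
  | succ m hm ih =>
    rw [chain_succ K hsub f n k' m hm, chain_succ K hsub f n k m (h.trans hm)]
    rw [← Category.assoc, ih]

lemma chain_mem (hK : IsIdealoid K) (hf : K f) (n k k' : ℕ) (h : k < k') (h2 : k' ≤ 2^n) :
    K (chain K hsub f n k k' h.le) := by
  induction k', h using Nat.le_induction with
  | base =>
    rw [chain_succ K hsub f n k k le_rfl, chain_self]
    simpa using step_mem K hsub f hK hf n k (by omega)
  | succ m hm ih =>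
    rw [chain_succ K hsub f n k m (by omega)]
    have h1 := ih (by omega)
    have h2' := step_mem K hsub f hK hf n m (by omega)
    have := hK (chain K hsub f n k m (by omega)) (step K hsub f n m) (𝟙 _) h2'
    simpa using this

lemma raise (n k k' : ℕ) (h : k ≤ k') :
    chain K hsub f (n+1) (2*k) (2*k') (by omega)
      = eqToHom (O_even K hsub f n k) ≫ chain K hsub f n k k' h ≫
          eqToHom (O_even K hsub f n k').symm := by
  induction k', h using Nat.le_induction with
  | base => rw [chain_self, chain_self]; simp
  | succ m hm ih =>
    have e1 : chain K hsub f (n+1) (2*k) (2*(m+1)) (by omega)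
        = chain K hsub f (n+1) (2*k) (2*m) (by omega) ≫
            step K hsub f (n+1) (2*m) ≫ step K hsub f (n+1) (2*m+1) := by
      rw [chain_congr K hsub f (rfl : n+1 = n+1) (rfl) (show 2*(m+1) = (2*m+1)+1 by omega) (by omega)]
      rw [chain_succ K hsub f (n+1) (2*k) (2*m+1) (by omega),
        chain_succ K hsub f (n+1) (2*k) (2*m) (by omega)]
      simp
    rw [e1, ih, step_split]
    rw [chain_succ K hsub f n k m hm]
    simp

lemma O_pow (n k m : ℕ) : O K hsub f (n+m) (2^m * k) = O K hsub f n k := by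
  induction m with
  | zero => simp
  | succ m ih =>
    have e1 : 2^(m+1) * k = 2 * (2^m * k) := by ring
    have e2 : n + (m+1) = (n + m) + 1 := by omega
    rw [e2, e1, O_even]
    exact ih

lemma raiseIter (n k k' m : ℕ) (h : k ≤ k') :
    chain K hsub f (n+m) (2^m*k) (2^m*k') (by
      exact Nat.mul_le_mul_left _ h)
      = eqToHom (O_pow K hsub f n k m) ≫ chain K hsub f n k k' h ≫
          eqToHom (O_pow K hsub f n k' m).symm := by
  induction m with
  | zero =>
    rw [chain_congr K hsub f (show n+0 = n by omega) (show 2^0*k = k by ring)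
      (show 2^0*k' = k' by ring)]
  | succ m ih =>
    have e1 : ∀ j : ℕ, 2^(m+1) * j = 2 * (2^m * j) := fun j => by ring
    rw [chain_congr K hsub f (show n+(m+1) = (n+m)+1 by omega) (e1 k) (e1 k')
      (by exact Nat.mul_le_mul_left _ h)]
    rw [raise K hsub f (n+m) (2^m*k) (2^m*k') (Nat.mul_le_mul_left _ h), ih]
    simp

lemma full_chain (hK : IsIdealoid K) (hf : K f) (m : ℕ) :
    chain K hsub f m 0 (2^m) (by positivity)
      = eqToHom (O_zero K hsub f m) ≫ f ≫ eqToHom (O_top K hsub f m).symm := by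
  have h0 : chain K hsub f 0 0 1 (by omega) = f := by
    rw [chain_succ K hsub f 0 0 0 le_rfl, chain_self]
    simp only [Category.id_comp]
    rfl
  have h1 := raiseIter K hsub f 0 0 1 m (by omega)
  rw [chain_congr K hsub f (show m = 0+m by omega) (show (0:ℕ) = 2^m * 0 by ring)
    (show 2^m = 2^m * 1 by ring) (by positivity)]
  rw [h1, h0]
  simp
  exact congrArg _ ((Category.assoc _ _ _).trans (congrArg _ (eqToHom_trans _ _)))

end Chain2

abbrev Dy : Type := {q : ℚ // (∃ n k : ℕ, q = (k:ℚ) / 2^n) ∧ 0 < q ∧ q < 1}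
abbrev Io : Type := {q : ℚ // 0 < q ∧ q < 1}

instance : Nontrivial Dy := by
  refine ⟨⟨1/4, ⟨2, 1, by norm_num⟩, by norm_num, by norm_num⟩,
    ⟨1/2, ⟨1, 1, by norm_num⟩, by norm_num, by norm_num⟩, ?_⟩
  intro h
  have := congrArg Subtype.val h
  norm_num at this

instance : DenselyOrdered Dy := by
  constructor
  rintro ⟨a, ⟨n, k, hk⟩, ha0, ha1⟩ ⟨b, ⟨m, l, hl⟩, hb0, hb1⟩ hab
  have hab' : a < b := hab
  have hpow : ((k * 2^m + l * 2^n : ℕ) : ℚ) / 2^(n+m+1) = (a+b)/2 := by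
    subst hk; subst hl
    push_cast
    rw [div_add_div _ _ (by positivity) (by positivity)]
    rw [div_div]
    congr 1
    · ring
    · ring
  refine ⟨⟨(a+b)/2, ⟨n+m+1, k * 2^m + l * 2^n, hpow.symm⟩, by linarith, by linarith⟩, ?_, ?_⟩
  · show a < (a+b)/2
    linarith
  · show (a+b)/2 < b
    linarith

noncomputable def dyEmb : Io ↪o Dy :=
  (Order.embedding_from_countable_to_dense (α := Io) (β := Dy)).some

noncomputable def dyQ (q : QIcc) : ℚ :=
  if h0 : q = qzero then 0 else if h1 : q = qone then 1 else
    (dyEmb ⟨q.1,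
      lt_of_le_of_ne q.2.1 (fun e => h0 (Subtype.ext e.symm)),
      lt_of_le_of_ne q.2.2 (fun e => h1 (Subtype.ext e))⟩).1

lemma dyQ_zero : dyQ qzero = 0 := dif_pos rfl
lemma dyQ_one : dyQ qone = 1 := by
  rw [dyQ, dif_neg (qzero_ne_qone.symm), dif_pos rfl]

lemma dyQ_dyadic (q : QIcc) (h0 : q ≠ qzero) (h1 : q ≠ qone) :
    (∃ n k : ℕ, dyQ q = (k:ℚ)/2^n) ∧ 0 < dyQ q ∧ dyQ q < 1 := by
  rw [dyQ, dif_neg h0, dif_neg h1]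
  exact (dyEmb _).2

lemma dyQ_strict {q q' : QIcc} (h : q < q') : dyQ q < dyQ q' := by
  have hq'0 : q' ≠ qzero := ne_zero_of_lt h
  have hq1 : q ≠ qone := ne_one_of_lt h
  by_cases h0 : q = qzero
  · subst h0
    rw [dyQ_zero]
    by_cases h1' : q' = qone
    · subst h1'; rw [dyQ_one]; norm_num
    · exact (dyQ_dyadic q' hq'0 h1').2.1
  · by_cases h1' : q' = qone
    · subst h1'
      rw [dyQ_one]
      exact (dyQ_dyadic q h0 hq1).2.2
    · rw [dyQ, dyQ, dif_neg h0, dif_neg hq1, dif_neg hq'0, dif_neg h1']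
      exact Subtype.coe_lt_coe.mpr (dyEmb.strictMono h)

lemma dyQ_mono {q q' : QIcc} (h : q ≤ q') : dyQ q ≤ dyQ q' := by
  rcases eq_or_lt_of_le h with he | hl
  · rw [he]
  · exact (dyQ_strict hl).le

lemma dyQ_rep (q : QIcc) : ∃ p : ℕ × ℕ, ((p.2:ℚ) / 2^p.1 = dyQ q) ∧ p.2 ≤ 2^p.1 := by
  by_cases h0 : q = qzero
  · exact ⟨(0, 0), by rw [h0, dyQ_zero]; norm_num, by norm_num⟩
  · by_cases h1 : q = qone
    · exact ⟨(0, 1), by rw [h1, dyQ_one]; norm_num, by norm_num⟩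
    · obtain ⟨⟨n, k, hk⟩, hpos, hlt⟩ := dyQ_dyadic q h0 h1
      refine ⟨(n, k), hk.symm, ?_⟩
      rw [hk] at hlt
      have h2 : (k:ℚ) < (2:ℚ)^n := by
        rw [div_lt_one (by positivity)] at hlt
        exact hlt
      have h3 : k < 2^n := by exact_mod_cast h2
      exact h3.le

noncomputable def NKq (q : QIcc) : ℕ × ℕ := (dyQ_rep q).choose

noncomputable def Nq (q : QIcc) : ℕ := (NKq q).1
noncomputable def Kq (q : QIcc) : ℕ := (NKq q).2

lemma NK_spec (q : QIcc) : ((Kq q:ℚ) / 2^(Nq q) = dyQ q) ∧ Kq q ≤ 2^(Nq q) :=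
  (dyQ_rep q).choose_spec

lemma Kq_zero : Kq qzero = 0 := by
  have h := (NK_spec qzero).1
  rw [dyQ_zero, div_eq_zero_iff] at h
  rcases h with h | h
  · exact_mod_cast h
  · exact absurd h (by positivity)

lemma Kq_one : Kq qone = 2^(Nq qone) := by
  have h := (NK_spec qone).1
  rw [dyQ_one, div_eq_one_iff_eq (by positivity)] at h
  have h2 : (Kq qone : ℚ) = ((2^(Nq qone) : ℕ) : ℚ) := by push_cast; linarith
  exact_mod_cast h2

noncomputable def LK (q : QIcc) (m : ℕ) : ℕ := Kq q * 2^(m - Nq q)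

lemma LK_cast (q : QIcc) (m : ℕ) (h : Nq q ≤ m) : ((LK q m : ℕ) : ℚ) = dyQ q * 2^m := by
  have h1 := (NK_spec q).1
  have h2 : (2:ℚ)^m = 2^(Nq q) * 2^(m - Nq q) := by
    rw [← pow_add]
    congr 1
    omega
  rw [LK]
  push_cast
  rw [← h1, h2]
  field_simp

lemma LK_le_pow (q : QIcc) (m : ℕ) (h : Nq q ≤ m) : LK q m ≤ 2^m := by
  have h1 := (NK_spec q).2
  calc LK q m = Kq q * 2^(m - Nq q) := rfl
    _ ≤ 2^(Nq q) * 2^(m - Nq q) := Nat.mul_le_mul_right _ h1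
    _ = 2^m := by rw [← pow_add]; congr 1; omega

lemma LK_mono {q q' : QIcc} (h : q ≤ q') (m : ℕ) (hm : Nq q ≤ m) (hm' : Nq q' ≤ m) :
    LK q m ≤ LK q' m := by
  have := dyQ_mono h
  have hc : ((LK q m : ℕ) : ℚ) ≤ ((LK q' m : ℕ) : ℚ) := by
    rw [LK_cast q m hm, LK_cast q' m hm']
    have : (0:ℚ) < 2^m := by positivity
    nlinarith
  exact_mod_cast hc

lemma LK_strict {q q' : QIcc} (h : q < q') (m : ℕ) (hm : Nq q ≤ m) (hm' : Nq q' ≤ m) :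
    LK q m < LK q' m := by
  have := dyQ_strict h
  have hc : ((LK q m : ℕ) : ℚ) < ((LK q' m : ℕ) : ℚ) := by
    rw [LK_cast q m hm, LK_cast q' m hm']
    have : (0:ℚ) < 2^m := by positivity
    nlinarith
  exact_mod_cast hc

lemma LK_succ (q : QIcc) (m : ℕ) (h : Nq q ≤ m) : LK q (m+1) = 2 * LK q m := by
  rw [LK, LK, show m + 1 - Nq q = (m - Nq q) + 1 by omega]
  ring

section Assembly
variable {C : Type*} [Category C] (K : MorphismProperty C) (hsub : IsSubdivisible K)
  {X Y : C} (f : X ⟶ Y)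

noncomputable def Gobj (q : QIcc) : C := O K hsub f (Nq q) (Kq q)

lemma O_lift (q : QIcc) (m : ℕ) (h : Nq q ≤ m) :
    O K hsub f m (LK q m) = Gobj K hsub f q := by
  obtain ⟨j, hj⟩ : ∃ j, m = Nq q + j := ⟨m - Nq q, by omega⟩
  subst hj
  have e1 : LK q (Nq q + j) = 2^j * Kq q := by
    rw [LK, show Nq q + j - Nq q = j by omega]
    ring
  rw [e1, O_pow]
  rfl

noncomputable def Gmap (q q' : QIcc) (h : q ≤ q') (m : ℕ) (hm : Nq q ≤ m) (hm' : Nq q' ≤ m) :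
    Gobj K hsub f q ⟶ Gobj K hsub f q' :=
  eqToHom (O_lift K hsub f q m hm).symm ≫
    chain K hsub f m (LK q m) (LK q' m) (LK_mono h m hm hm') ≫
    eqToHom (O_lift K hsub f q' m hm')

lemma Gmap_succ (q q' : QIcc) (h : q ≤ q') (m : ℕ) (hm : Nq q ≤ m) (hm' : Nq q' ≤ m) :
    Gmap K hsub f q q' h m hm hm' = Gmap K hsub f q q' h (m+1) (by omega) (by omega) := by
  rw [Gmap, Gmap]
  rw [chain_congr K hsub f (rfl : m+1 = m+1) (LK_succ q m hm) (LK_succ q' m hm')]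
  rw [raise K hsub f m (LK q m) (LK q' m) (LK_mono h m hm hm')]
  simp

lemma Gmap_add (q q' : QIcc) (h : q ≤ q') (m : ℕ) (hm : Nq q ≤ m) (hm' : Nq q' ≤ m) (j : ℕ) :
    Gmap K hsub f q q' h m hm hm' = Gmap K hsub f q q' h (m+j) (by omega) (by omega) := by
  induction j with
  | zero => rfl
  | succ j ih => exact ih.trans (Gmap_succ K hsub f q q' h (m+j) (by omega) (by omega))

lemma Gmap_congr (q q' : QIcc) (h : q ≤ q') (m m' : ℕ) (e : m = m') (hm : Nq q ≤ m)
    (hm' : Nq q' ≤ m) (hm2 : Nq q ≤ m') (hm2' : Nq q' ≤ m') :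
    Gmap K hsub f q q' h m hm hm' = Gmap K hsub f q q' h m' hm2 hm2' := by
  subst e; rfl

lemma Gmap_indep (q q' : QIcc) (h : q ≤ q') (m m' : ℕ) (hm : Nq q ≤ m) (hm' : Nq q' ≤ m)
    (hm2 : Nq q ≤ m') (hm2' : Nq q' ≤ m') :
    Gmap K hsub f q q' h m hm hm' = Gmap K hsub f q q' h m' hm2 hm2' := by
  rcases le_total m m' with hle | hle
  · exact (Gmap_add K hsub f q q' h m hm hm' (m' - m)).trans
      (Gmap_congr K hsub f q q' h _ _ (by omega) _ _ _ _)
  · exact ((Gmap_add K hsub f q q' h m' hm2 hm2' (m - m')).trans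
      (Gmap_congr K hsub f q q' h _ _ (by omega) _ _ _ _)).symm

noncomputable def lev (q q' : QIcc) : ℕ := max (Nq q) (Nq q')

lemma Gmap_id (q : QIcc) :
    Gmap K hsub f q q le_rfl (lev q q) (le_max_left _ _) (le_max_right _ _) = 𝟙 _ := by
  unfold Gmap; rw [chain_self]
  simp

lemma Gmap_comp (q q' q'' : QIcc) (h : q ≤ q') (h' : q' ≤ q'') :
    Gmap K hsub f q q'' (h.trans h') (lev q q'') (le_max_left _ _) (le_max_right _ _)
      = Gmap K hsub f q q' h (lev q q') (le_max_left _ _) (le_max_right _ _) ≫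
        Gmap K hsub f q' q'' h' (lev q' q'') (le_max_left _ _) (le_max_right _ _) := by
  set M := max (Nq q) (max (Nq q') (Nq q'')) with hM
  rw [Gmap_indep K hsub f q q'' _ (lev q q'') M (le_max_left _ _) (le_max_right _ _)
    (by omega) (by omega)]
  rw [Gmap_indep K hsub f q q' _ (lev q q') M (le_max_left _ _) (le_max_right _ _)
    (by omega) (by omega)]
  rw [Gmap_indep K hsub f q' q'' _ (lev q' q'') M (le_max_left _ _) (le_max_right _ _)
    (by omega) (by omega)]
  rw [Gmap, Gmap, Gmap]
  simp only [Category.assoc, eqToHom_trans_assoc, eqToHom_refl, Category.id_comp]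
  rw [← Category.assoc (chain K hsub f M (LK q M) (LK q' M) _), chain_comp]

noncomputable def G : QIcc ⥤ C where
  obj := Gobj K hsub f
  map {q q'} φ := Gmap K hsub f q q' (leOfHom φ) (lev q q') (le_max_left _ _) (le_max_right _ _)
  map_id q := Gmap_id K hsub f q
  map_comp {q q' q''} φ ψ := Gmap_comp K hsub f q q' q'' (leOfHom φ) (leOfHom ψ)

end Assembly

section Final
variable {C : Type*} [Category C] {I K : MorphismProperty C}

lemma LK_zero (m : ℕ) : LK qzero m = 0 := by rw [LK, Kq_zero, Nat.zero_mul]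

lemma LK_one (m : ℕ) (h : Nq qone ≤ m) : LK qone m = 2^m := by
  rw [LK, Kq_one, ← pow_add]
  congr 1
  omega

theorem refinable_of_subidealoid (hK : IsIdealoid K) (hsub : IsSubdivisible K)
    (hKI : ∀ ⦃X Y : C⦄ (f : X ⟶ Y), K f → I f) {X Y : C} (f : X ⟶ Y) (hf : K f) :
    Refinable I f := by
  have e0 : (G K hsub f).obj qzero = X := by
    show O K hsub f (Nq qzero) (Kq qzero) = X
    rw [Kq_zero]
    exact O_zero K hsub f _
  have e1 : (G K hsub f).obj qone = Y := by
    show O K hsub f (Nq qone) (Kq qone) = Y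
    rw [Kq_one]
    exact O_top K hsub f _
  refine ⟨G K hsub f, eqToIso e0, eqToIso e1, ?_, ?_⟩
  · intro a b hlt
    show I (Gmap K hsub f a b hlt.le (lev a b) (le_max_left _ _) (le_max_right _ _))
    unfold Gmap
    refine hKI _ (K_cast K hK _ _ ?_)
    exact chain_mem K hsub f hK hf (lev a b) _ _
      (LK_strict hlt (lev a b) (le_max_left _ _) (le_max_right _ _))
      (LK_le_pow b (lev a b) (le_max_right _ _))
  · show Gmap K hsub f qzero qone qzero_le_qone (lev qzero qone)
      (le_max_left _ _) (le_max_right _ _) = _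
    unfold Gmap
    rw [chain_congr K hsub f (rfl : lev qzero qone = lev qzero qone)
      (LK_zero (lev qzero qone)) (LK_one (lev qzero qone) (le_max_right _ _))]
    rw [full_chain K hsub f hK hf]
    simp [eqToIso]
    rfl

end Final


end LSS

/-- For any idealoid `I`, the class `J = Refinable I` is the largest subdivisible
subidealoid of `I`: it is an idealoid, subdivisible, contained in `I`, and contains every
subdivisible subidealoid of `I`. -/
theorem largest_subdivisible_subidealoid {C : Type*} [Category C] (I : MorphismProperty C)
    (hI : IsIdealoid I) :
    IsIdealoid (Refinable I) ∧ IsSubdivisible (Refinable I) ∧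
      (∀ ⦃X Y : C⦄ (f : X ⟶ Y), Refinable I f → I f) ∧
      (∀ K : MorphismProperty C, IsIdealoid K → IsSubdivisible K →
        (∀ ⦃X Y : C⦄ (f : X ⟶ Y), K f → I f) →
        ∀ ⦃X Y : C⦄ (f : X ⟶ Y), K f → Refinable I f) := by
  refine ⟨LSS.refinable_idealoid hI, LSS.refinable_subdiv, ?_, ?_⟩
  · intro X Y f hf
    exact LSS.refinable_le hI f hf
  · intro K hK hsub hKI X Y f hf
    exact LSS.refinable_of_subidealoid hK hsub hKI f hf
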